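/- Every countably compact topological space X is weakly Grothendieck: if A ⊆ C_p(X) is countably compact in C_p(X) (every infinite subset of A has a limit point in C_p(X)), then the closure of A in C_p(X) is compact. -/

import Mathlib

open Filter Topology

/-- The space `C_p(X)` of continuous real-valued functions on `X` with the
topology of pointwise convergence (inherited from the product topology). -/
def Cp (X : Type*) [TopologicalSpace X] : Type _ := {f : X → ℝ // Continuous f}

instance (X : Type*) [TopologicalSpace X] : TopologicalSpace (Cp X) :=
  instTopologicalSpaceSubtype

/-- `p` is a limit point of `S`. -/
def IsLimitPt {Y : Type*} [TopologicalSpace Y] (S : Set Y) (p : Y) : Prop :=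
  p ∈ closure (S \ {p})

/-- `A` is countably compact in the ambient space `Y`: every infinite subset of `A`
has a limit point in `Y`. -/
def CountablyCompactIn {Y : Type*} [TopologicalSpace Y] (A : Set Y) : Prop :=
  ∀ S ⊆ A, S.Infinite → ∃ p : Y, IsLimitPt S p

/-- `X` is countably compact: every countable open cover has a finite subcover. -/
def CountablyCompact (X : Type*) [TopologicalSpace X] : Prop :=
  ∀ U : ℕ → Set X, (∀ n, IsOpen (U n)) → (⋃ n, U n) = Set.univ →
    ∃ F : Finset ℕ, (⋃ n ∈ F, U n) = Set.univ

/-! ### Auxiliary material -/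

instance (X : Type*) [TopologicalSpace X] : T2Space (Cp X) :=
  inferInstanceAs (T2Space {f : X → ℝ // Continuous f})

/-- Strong recursion builder: value at `n` may depend on all earlier values. -/
noncomputable def buildSeq {β : Type*} (d : β) (g : ℕ → (ℕ → β) → β) : ℕ → β
  | n => g n (fun m => if h : m < n then buildSeq d g m else d)
termination_by n => n
decreasing_by exact h

lemma eq_of_abs_sub_lt {a b : ℝ} (h : ∀ δ > 0, |a - b| < δ) : a = b := by
  by_contra hne
  exact lt_irrefl _ (h _ (abs_pos.2 (sub_ne_zero.2 hne)))

lemma abs_lt_open {X : Type*} [TopologicalSpace X] {g : X → ℝ} (hg : Continuous g) (c δ : ℝ) :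
    IsOpen {y | |g y - c| < δ} := by
  have : {y | |g y - c| < δ} = g ⁻¹' Metric.ball c δ := by
    ext y; simp [Metric.mem_ball, Real.dist_eq]
  rw [this]; exact hg.isOpen_preimage _ Metric.isOpen_ball

/-- In a T1 space, every neighborhood of a limit point of `S` meets `S` in an
infinite set. -/
lemma IsLimitPt.inter_infinite {Y : Type*} [TopologicalSpace Y] [T1Space Y] {S : Set Y} {p : Y}
    (h : IsLimitPt S p) {U : Set Y} (hU : U ∈ 𝓝 p) : (U ∩ S).Infinite := by
  have key : (U ∩ (S \ {p})).Infinite := by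
    intro hfin
    have hcl : IsClosed (U ∩ (S \ {p})) := hfin.isClosed
    have hp : p ∉ U ∩ (S \ {p}) := fun hp => hp.2.2 rfl
    have hU' : U ∩ (U ∩ (S \ {p}))ᶜ ∈ 𝓝 p :=
      Filter.inter_mem hU (hcl.isOpen_compl.mem_nhds hp)
    obtain ⟨y, hy1, hy2⟩ := mem_closure_iff_nhds.1 h _ hU'
    exact hy1.2 ⟨hy1.1, hy2⟩
  exact key.mono (Set.inter_subset_inter_right U Set.diff_subset)

lemma infinite_idx {Y : Type*} (u : ℕ → Y) {U : Set Y} (h : (U ∩ Set.range u).Infinite) :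
    {n : ℕ | u n ∈ U}.Infinite := by
  apply Set.Infinite.of_image u
  apply h.mono
  rintro y ⟨hyU, n, rfl⟩
  exact ⟨n, hyU, rfl⟩

/-- A countably compact space: every sequence has a cluster point. -/
lemma exists_cluster {X : Type*} [TopologicalSpace X] (hX : CountablyCompact X) (u : ℕ → X) :
    ∃ z : X, ∀ U : Set X, IsOpen U → z ∈ U → ∀ N, ∃ n, N ≤ n ∧ u n ∈ U := by
  have hne : (⋂ N, closure (u '' Set.Ici N)).Nonempty := by
    by_contra hemp
    rw [Set.not_nonempty_iff_eq_empty] at hemp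
    have hcov : (⋃ N, (closure (u '' Set.Ici N))ᶜ) = Set.univ := by
      rw [← Set.compl_iInter, hemp, Set.compl_empty]
    obtain ⟨F, hF⟩ := hX _ (fun N => isClosed_closure.isOpen_compl) hcov
    have hmem : u (F.sup id + 1) ∈ Set.univ := trivial
    rw [← hF] at hmem
    simp only [Set.mem_iUnion] at hmem
    obtain ⟨i, hiF, hmem⟩ := hmem
    apply hmem
    apply subset_closure
    exact ⟨F.sup id + 1, by
      simp only [Set.mem_Ici]
      exact le_trans (Finset.le_sup (f := id) hiF) (Nat.le_succ _), rfl⟩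
  obtain ⟨z, hz⟩ := hne
  refine ⟨z, fun U hUo hzU N => ?_⟩
  have hzc : z ∈ closure (u '' Set.Ici N) := Set.mem_iInter.1 hz N
  obtain ⟨y, hyU, n, hn, rfl⟩ := mem_closure_iff.1 hzc U hUo hzU
  exact ⟨n, hn, hyU⟩

/-- Basic neighborhoods in the product: approximation on finite sets. -/
lemma pi_nbhd_mem {X : Type*} [TopologicalSpace X] {f : X → ℝ} {Q : Set (X → ℝ)}
    (hf : f ∈ closure Q) (t : Finset X) {δ : ℝ} (hδ : 0 < δ) :
    ∃ q ∈ Q, ∀ x ∈ t, |q x - f x| < δ := by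
  have hopen : IsOpen {g : X → ℝ | ∀ x ∈ t, |g x - f x| < δ} := by
    have : {g : X → ℝ | ∀ x ∈ t, |g x - f x| < δ}
        = ⋂ x ∈ t, (fun g : X → ℝ => g x) ⁻¹' Metric.ball (f x) δ := by
      ext g; simp [Metric.mem_ball, Real.dist_eq]
    rw [this]
    exact isOpen_biInter_finset fun x _ =>
      (continuous_apply x).isOpen_preimage _ Metric.isOpen_ball
  have hmemf : f ∈ {g : X → ℝ | ∀ x ∈ t, |g x - f x| < δ} := fun x _ => by simpa using hδ
  obtain ⟨q, hq1, hq2⟩ := mem_closure_iff.1 hf _ hopen hmemf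
  exact ⟨q, hq2, hq1⟩

/-- Basic neighborhoods in `Cp X`. -/
lemma cp_nbhd_mem {X : Type*} [TopologicalSpace X] (g : Cp X) (t : Finset X) {δ : ℝ}
    (hδ : 0 < δ) : {h : Cp X | ∀ x ∈ t, |h.1 x - g.1 x| < δ} ∈ 𝓝 g := by
  have hopen : IsOpen {q : X → ℝ | ∀ x ∈ t, |q x - g.1 x| < δ} := by
    have : {q : X → ℝ | ∀ x ∈ t, |q x - g.1 x| < δ}
        = ⋂ x ∈ t, (fun q : X → ℝ => q x) ⁻¹' Metric.ball (g.1 x) δ := by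
      ext q; simp [Metric.mem_ball, Real.dist_eq]
    rw [this]
    exact isOpen_biInter_finset fun x _ =>
      (continuous_apply x).isOpen_preimage _ Metric.isOpen_ball
  have : {h : Cp X | ∀ x ∈ t, |h.1 x - g.1 x| < δ}
      = (Subtype.val : Cp X → X → ℝ) ⁻¹' {q : X → ℝ | ∀ x ∈ t, |q x - g.1 x| < δ} := rfl
  rw [this]
  exact (hopen.preimage continuous_subtype_val).mem_nhds (fun x _ => by simpa using hδ)

/-- Pointwise boundedness of countably compact subsets of `Cp X`. -/
lemma pointwise_bdd {X : Type*} [TopologicalSpace X] {A : Set (Cp X)}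
    (hA : CountablyCompactIn A) (x : X) : ∃ M : ℝ, ∀ g ∈ A, |g.1 x| ≤ M := by
  by_contra hM
  push_neg at hM
  choose u hu1 hu2 using fun n : ℕ => hM n
  have hSA : Set.range u ⊆ A := by rintro _ ⟨n, rfl⟩; exact hu1 n
  have hSinf : (Set.range u).Infinite := by
    intro hfin
    obtain ⟨B, hB⟩ := (hfin.image (fun g : Cp X => |g.1 x|)).bddAbove
    obtain ⟨n, hn⟩ := exists_nat_gt B
    have : |(u n).1 x| ≤ B := hB ⟨u n, Set.mem_range_self n, rfl⟩
    have h2 := hu2 n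
    linarith
  obtain ⟨p, hp⟩ := hA _ hSA hSinf
  have hnb : {h : Cp X | ∀ y ∈ ({x} : Finset X), |h.1 y - p.1 y| < 1} ∈ 𝓝 p :=
    cp_nbhd_mem p {x} one_pos
  have hidx := infinite_idx u (hp.inter_infinite hnb)
  obtain ⟨n, hn, hlt⟩ := hidx.exists_gt ⌈|p.1 x| + 1⌉₊
  have h1 : |(u n).1 x - p.1 x| < 1 := hn x (Finset.mem_singleton_self x)
  have h2 := hu2 n
  have h3 : |p.1 x| + 1 ≤ (n : ℝ) := by
    calc |p.1 x| + 1 ≤ (⌈|p.1 x| + 1⌉₊ : ℝ) := Nat.le_ceil _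
    _ ≤ (n : ℝ) := by exact_mod_cast hlt.le
  have h4 : |(u n).1 x| ≤ |(u n).1 x - p.1 x| + |p.1 x| := by
    have := abs_sub_le ((u n).1 x) (p.1 x) 0
    simpa using this
  linarith

/-- Grothendieck's key lemma: every pointwise limit of `A` is continuous. -/
lemma closure_continuous {X : Type*} [TopologicalSpace X] (hX : CountablyCompact X)
    {A : Set (Cp X)} (hA : CountablyCompactIn A) {f : X → ℝ}
    (hf : f ∈ closure (Subtype.val '' A)) : Continuous f := by
  rw [continuous_iff_continuousAt]
  intro x₀
  by_contra hnc
  rw [ContinuousAt, Metric.tendsto_nhds] at hnc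
  push_neg at hnc
  obtain ⟨ε, hε, hfr⟩ := hnc
  simp only [← not_lt] at hfr
  have hfr' : ∀ U ∈ 𝓝 x₀, ∃ x ∈ U, ε ≤ |f x - f x₀| := by
    intro U hU
    obtain ⟨x, hxU, hx⟩ := Filter.frequently_iff.1 hfr hU
    exact ⟨x, hxU, by rw [← Real.dist_eq]; exact not_lt.1 hx⟩
  -- The interleaved construction of functions fₙ ∈ A and points xₙ near x₀.
  have hex : ∀ (n : ℕ) (prev : ℕ → Cp X × X), ∃ p : Cp X × X,
      p.1 ∈ A ∧ |p.1.1 x₀ - f x₀| < 1/(n+1) ∧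
      (∀ m < n, |p.1.1 (prev m).2 - f ((prev m).2)| < 1/(n+1)) ∧
      ε ≤ |f p.2 - f x₀| ∧ |p.1.1 p.2 - p.1.1 x₀| < 1/(n+1) ∧
      (∀ m < n, |(prev m).1.1 p.2 - (prev m).1.1 x₀| < 1/(n+1)) := by
    intro n prev
    classical
    have hδ : (0:ℝ) < 1/(n+1) := by positivity
    obtain ⟨q, hqQ, hq⟩ := pi_nbhd_mem hf
      (insert x₀ ((Finset.range n).image (fun m => (prev m).2))) hδ
    obtain ⟨h, hhA, rfl⟩ := hqQ
    set U : Set X := {y | |h.1 y - h.1 x₀| < 1/(n+1)} ∩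
      ⋂ m ∈ Finset.range n, {y | |(prev m).1.1 y - (prev m).1.1 x₀| < 1/(n+1)} with hU
    have hUopen : IsOpen U :=
      (abs_lt_open h.2 _ _).inter
        (isOpen_biInter_finset fun m _ => abs_lt_open (prev m).1.2 _ _)
    have hx₀U : x₀ ∈ U := by
      constructor
      · simpa using hδ
      · simp only [Set.mem_iInter]
        intro m _
        simpa using hδ
    obtain ⟨x, hxU, hx⟩ := hfr' U (hUopen.mem_nhds hx₀U)
    refine ⟨(h, x), hhA, hq x₀ (Finset.mem_insert_self _ _), ?_, hx, hxU.1, ?_⟩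
    · intro m hm
      exact hq _ (Finset.mem_insert_of_mem
        (Finset.mem_image_of_mem _ (Finset.mem_range.2 hm)))
    · intro m hm
      have h2 := hxU.2
      simp only [Set.mem_iInter] at h2
      exact h2 m (Finset.mem_range.2 hm)
  set d : Cp X × X := (⟨fun _ => 0, continuous_const⟩, x₀) with hd
  set step : ℕ → (ℕ → Cp X × X) → Cp X × X := fun n prev => Classical.choose (hex n prev)
    with hstep
  set seq : ℕ → Cp X × X := buildSeq d step with hseq
  set F : ℕ → Cp X := fun n => (seq n).1 with hF
  set x : ℕ → X := fun n => (seq n).2 with hx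
  have hspec : ∀ n, F n ∈ A ∧ |(F n).1 x₀ - f x₀| < 1/(n+1) ∧
      (∀ m < n, |(F n).1 (x m) - f (x m)| < 1/(n+1)) ∧
      ε ≤ |f (x n) - f x₀| ∧ |(F n).1 (x n) - (F n).1 x₀| < 1/(n+1) ∧
      (∀ m < n, |(F m).1 (x n) - (F m).1 x₀| < 1/(n+1)) := by
    intro n
    have heq : seq n = step n (fun m => if h : m < n then seq m else d) := by
      rw [hseq, buildSeq]
    simp only [hstep] at heq
    have hs := Classical.choose_spec (hex n (fun m => if h : m < n then seq m else d))
    rw [← heq] at hs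
    obtain ⟨h1, h2, h3, h4, h5, h6⟩ := hs
    refine ⟨h1, h2, ?_, h4, h5, ?_⟩
    · intro m hm; have := h3 m hm; rwa [dif_pos hm] at this
    · intro m hm; have := h6 m hm; rwa [dif_pos hm] at this
  obtain ⟨z, hz⟩ := exists_cluster hX x
  -- every fₘ takes the same value at the cluster point z as at x₀
  have hFz : ∀ m, (F m).1 z = (F m).1 x₀ := by
    intro m
    apply eq_of_abs_sub_lt
    intro δ hδ
    obtain ⟨N₀, hN₀⟩ := exists_nat_one_div_lt (half_pos hδ)
    have hUz : z ∈ {y | |(F m).1 y - (F m).1 z| < δ/2} := by simpa using half_pos hδ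
    obtain ⟨n, hnN, hnU⟩ := hz _ (abs_lt_open (F m).2 _ _) hUz (max (m+1) N₀)
    have hmn : m < n := lt_of_lt_of_le (Nat.lt_succ_self m)
      (le_trans (le_max_left _ _) hnN)
    have h6 := (hspec n).2.2.2.2.2 m hmn
    have hcast : (N₀ : ℝ) ≤ n := Nat.cast_le.2 (le_trans (le_max_right _ _) hnN)
    have h3 : 1/((n:ℝ)+1) ≤ 1/((N₀:ℝ)+1) :=
      one_div_le_one_div_of_le (by positivity) (by linarith)
    simp only [Set.mem_setOf_eq] at hnU
    have htri := abs_sub_le ((F m).1 z) ((F m).1 (x n)) ((F m).1 x₀)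
    rw [abs_sub_comm ((F m).1 z) ((F m).1 (x n))] at htri
    linarith
  -- find a continuous g which clusters the sequence F pointwise
  obtain ⟨g, hg⟩ : ∃ g : Cp X, ∀ (t : Finset X), ∀ δ > 0, ∀ N : ℕ,
      ∃ n, N ≤ n ∧ ∀ y ∈ t, |(F n).1 y - g.1 y| < δ := by
    by_cases hS : (Set.range F).Infinite
    · obtain ⟨p, hp⟩ := hA (Set.range F) (by rintro _ ⟨n, rfl⟩; exact (hspec n).1) hS
      refine ⟨p, fun t δ hδ N => ?_⟩
      have hinf := infinite_idx F (hp.inter_infinite (cp_nbhd_mem p t hδ))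
      obtain ⟨n, hn, hlt⟩ := hinf.exists_gt N
      exact ⟨n, hlt.le, hn⟩
    · rw [Set.not_infinite] at hS
      have hfin : Finite ↥(Set.range F) := hS.to_subtype
      obtain ⟨⟨g, hgmem⟩, hfib⟩ := Finite.exists_infinite_fiber
        (fun n => (⟨F n, Set.mem_range_self n⟩ : ↥(Set.range F)))
      have hset : (fun n => (⟨F n, Set.mem_range_self n⟩ : ↥(Set.range F))) ⁻¹'
          {⟨g, hgmem⟩} = {n | F n = g} := by
        ext n; simp [Subtype.ext_iff]
      rw [hset] at hfib
      have hfib' := Set.infinite_coe_iff.1 hfib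
      refine ⟨g, fun t δ hδ N => ?_⟩
      obtain ⟨n, hn, hlt⟩ := hfib'.exists_gt N
      exact ⟨n, hlt.le, fun y _ => by rw [hn]; simpa using hδ⟩
  -- g agrees with f at x₀ and all xₙ, and g z = f x₀
  have hgx₀ : g.1 x₀ = f x₀ := by
    apply eq_of_abs_sub_lt
    intro δ hδ
    obtain ⟨N₀, hN₀⟩ := exists_nat_one_div_lt (half_pos hδ)
    obtain ⟨n, hn, hcl⟩ := hg {x₀} (δ/2) (half_pos hδ) N₀
    have h1 := hcl x₀ (Finset.mem_singleton_self x₀)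
    have h2 := (hspec n).2.1
    have hcast : (N₀:ℝ) ≤ n := Nat.cast_le.2 hn
    have h3 : 1/((n:ℝ)+1) ≤ 1/((N₀:ℝ)+1) :=
      one_div_le_one_div_of_le (by positivity) (by linarith)
    have htri := abs_sub_le (g.1 x₀) ((F n).1 x₀) (f x₀)
    rw [abs_sub_comm (g.1 x₀) ((F n).1 x₀)] at htri
    linarith
  have hgx : ∀ i, g.1 (x i) = f (x i) := by
    intro i
    apply eq_of_abs_sub_lt
    intro δ hδ
    obtain ⟨N₀, hN₀⟩ := exists_nat_one_div_lt (half_pos hδ)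
    obtain ⟨n, hn, hcl⟩ := hg {x i} (δ/2) (half_pos hδ) (max N₀ (i+1))
    have h1 := hcl (x i) (Finset.mem_singleton_self _)
    have h2 := (hspec n).2.2.1 i
      (lt_of_lt_of_le (Nat.lt_succ_self i) (le_trans (le_max_right _ _) hn))
    have hcast : (N₀:ℝ) ≤ n := Nat.cast_le.2 (le_trans (le_max_left _ _) hn)
    have h3 : 1/((n:ℝ)+1) ≤ 1/((N₀:ℝ)+1) :=
      one_div_le_one_div_of_le (by positivity) (by linarith)
    have htri := abs_sub_le (g.1 (x i)) ((F n).1 (x i)) (f (x i))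
    rw [abs_sub_comm (g.1 (x i)) ((F n).1 (x i))] at htri
    linarith
  have hgz : g.1 z = f x₀ := by
    apply eq_of_abs_sub_lt
    intro δ hδ
    obtain ⟨N₀, hN₀⟩ := exists_nat_one_div_lt (half_pos hδ)
    obtain ⟨n, hn, hcl⟩ := hg {z} (δ/2) (half_pos hδ) N₀
    have h1 := hcl z (Finset.mem_singleton_self _)
    rw [hFz n] at h1
    have h2 := (hspec n).2.1
    have hcast : (N₀:ℝ) ≤ n := Nat.cast_le.2 hn
    have h3 : 1/((n:ℝ)+1) ≤ 1/((N₀:ℝ)+1) :=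
      one_div_le_one_div_of_le (by positivity) (by linarith)
    have htri := abs_sub_le (g.1 z) ((F n).1 x₀) (f x₀)
    rw [abs_sub_comm (g.1 z) ((F n).1 x₀)] at htri
    linarith
  -- final contradiction with continuity of g at the cluster point z
  have hUz : z ∈ {y | |g.1 y - g.1 z| < ε} := by simpa using hε
  obtain ⟨n, -, hnU⟩ := hz _ (abs_lt_open g.2 _ _) hUz 0
  have h4 := (hspec n).2.2.2.1
  simp only [Set.mem_setOf_eq] at hnU
  rw [hgx n, hgz] at hnU
  linarith

theorem stmt_13 {X : Type*} [TopologicalSpace X] (hX : CountablyCompact X)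
    (A : Set (Cp X)) (hA : CountablyCompactIn A) :
    IsCompact (closure A) := by
  choose M hM using fun x => pointwise_bdd hA x
  have hQsub : Subtype.val '' A ⊆ Set.pi Set.univ (fun x => Set.Icc (-(M x)) (M x)) := by
    rintro _ ⟨g, hgA, rfl⟩ x _
    exact abs_le.1 (hM x g hgA)
  have hKc : IsCompact (Set.pi Set.univ fun x => Set.Icc (-(M x)) (M x)) :=
    isCompact_univ_pi fun x => isCompact_Icc
  have hclQc : IsCompact (closure (Subtype.val '' A)) :=
    hKc.of_isClosed_subset isClosed_closure (closure_minimal hQsub hKc.isClosed)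
  have himg : Subtype.val '' closure A = closure (Subtype.val '' A) := by
    apply Set.Subset.antisymm
    · rintro _ ⟨g, hg, rfl⟩
      exact closure_subtype.1 hg
    · rintro q hq
      exact ⟨⟨q, closure_continuous hX hA hq⟩, closure_subtype.2 hq, rfl⟩
  have hemb : Topology.IsEmbedding (Subtype.val : Cp X → X → ℝ) :=
    Topology.IsEmbedding.subtypeVal
  rw [← himg] at hclQc; refine hemb.isCompact_iff.2 ?_
  exact hclQc
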